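/- Let E = ℝ^n with Euclidean norm |·|, let H be a norm on E with (1/μ)|x| ≤ H(x) ≤ μ|x| for some μ ≥ 1, and let c, Δ > 0. Let S, F: E → E be maps such that H(F(x)) = H(x) for all x, and |S(x) − F(x)| ≤ c/|x| whenever |x| ≥ 1/Δ. Set C̄ := 2μ²c + 3μ²c²Δ². Then for every x and every integer k ≥ 1 such that H(S^j(x)) ≥ μ/Δ for all j = 0, 1, …, k−1, one has |H(S^k(x))² − H(x)²| ≤ C̄·k. (Applied with S = T², F the time-1 flow map of V, and H the gauge of the symplectic polar of the symmetrization of M, this shows orbits of the outer symplectic billiard map escape to infinity at rate at most of order √k.) -/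

import Mathlib

/-- Let `E = ℝ^n` with the Euclidean norm `‖·‖`, let `H` be a norm on
`E` with `(1/μ)‖x‖ ≤ H x ≤ μ‖x‖` for some `μ ≥ 1`, and let `c, Δ > 0`.  Let
`S, F : E → E` be maps with `H (F x) = H x` for all `x` and `‖S x − F x‖ ≤ c/‖x‖`
whenever `‖x‖ ≥ 1/Δ`.  Set `C̄ := 2μ²c + 3μ²c²Δ²`.  Then for every `x` and every `k ≥ 1`
such that `H (S^[j] x) ≥ μ/Δ` for all `j = 0, 1, …, k−1`, one has
`|H (S^[k] x)² − H x²| ≤ C̄ k`.  (Orbits escape at rate at most of order `√k`.) -/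
theorem stmt12 {n : ℕ} (H : EuclideanSpace ℝ (Fin n) → ℝ)
    (Hadd : ∀ x y : EuclideanSpace ℝ (Fin n), H (x + y) ≤ H x + H y)
    (Hsmul : ∀ (c : ℝ) (x : EuclideanSpace ℝ (Fin n)), H (c • x) = |c| * H x)
    (Hdef : ∀ x : EuclideanSpace ℝ (Fin n), H x = 0 → x = 0)
    (μ : ℝ) (hμ : 1 ≤ μ)
    (hlow : ∀ x : EuclideanSpace ℝ (Fin n), (1 / μ) * ‖x‖ ≤ H x)
    (hup : ∀ x : EuclideanSpace ℝ (Fin n), H x ≤ μ * ‖x‖)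
    (c Δ : ℝ) (hc : 0 < c) (hΔ : 0 < Δ)
    (S F : EuclideanSpace ℝ (Fin n) → EuclideanSpace ℝ (Fin n))
    (hF : ∀ x, H (F x) = H x)
    (hSF : ∀ x : EuclideanSpace ℝ (Fin n), 1 / Δ ≤ ‖x‖ → ‖S x - F x‖ ≤ c / ‖x‖) :
    ∀ (x : EuclideanSpace ℝ (Fin n)) (k : ℕ), 1 ≤ k →
      (∀ j < k, μ / Δ ≤ H (S^[j] x)) →
      |H (S^[k] x) ^ 2 - H x ^ 2| ≤ (2 * μ ^ 2 * c + 3 * μ ^ 2 * c ^ 2 * Δ ^ 2) * k := by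
  have hμ0 : (0 : ℝ) < μ := lt_of_lt_of_le one_pos hμ
  have Hnonneg : ∀ x, 0 ≤ H x := by
    intro x
    exact le_trans (by positivity) (hlow x)
  -- reverse triangle inequality for H
  have Hrev : ∀ a b : EuclideanSpace ℝ (Fin n), |H a - H b| ≤ H (a - b) := by
    intro a b
    have hneg : H (b - a) = H (a - b) := by
      have := Hsmul (-1) (a - b)
      simpa [neg_sub] using this
    rw [abs_sub_le_iff]
    constructor
    · have := Hadd (a - b) b
      simpa [sub_add_cancel] using this
    · have := Hadd (b - a) a
      rw [hneg] at this
      simpa [sub_add_cancel] using this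
  -- one-step estimate
  have key : ∀ y : EuclideanSpace ℝ (Fin n), μ / Δ ≤ H y →
      |H (S y) ^ 2 - H y ^ 2| ≤ 2 * μ ^ 2 * c + 3 * μ ^ 2 * c ^ 2 * Δ ^ 2 := by
    intro y hy
    have hHy : 0 < H y := lt_of_lt_of_le (by positivity) hy
    have hyn : H y / μ ≤ ‖y‖ := by
      have := hup y
      rw [div_le_iff₀ hμ0]; linarith [this, mul_comm μ ‖y‖]
    have hyn1 : 1 / Δ ≤ ‖y‖ := by
      have h1 : μ / Δ / μ ≤ H y / μ := by gcongr
      have h2 : μ / Δ / μ = 1 / Δ := by field_simp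
      rw [h2] at h1
      exact h1.trans hyn
    have hSFy : ‖S y - F y‖ ≤ c / ‖y‖ := hSF y hyn1
    have hyn0 : 0 < ‖y‖ := lt_of_lt_of_le (by positivity) hyn1
    have hδ : H (S y - F y) ≤ μ ^ 2 * c / H y := by
      calc H (S y - F y) ≤ μ * ‖S y - F y‖ := hup _
        _ ≤ μ * (c / ‖y‖) := by
            exact mul_le_mul_of_nonneg_left hSFy hμ0.le
        _ ≤ μ * (c / (H y / μ)) := by
            apply mul_le_mul_of_nonneg_left _ hμ0.le
            apply div_le_div_of_nonneg_left hc.le (by positivity) hyn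
        _ = μ ^ 2 * c / H y := by
            field_simp
    have hδ2 : H (S y - F y) ≤ μ * c * Δ := by
      refine hδ.trans ?_
      rw [div_le_iff₀ hHy]
      calc μ ^ 2 * c = μ * c * (μ / Δ) * Δ := by field_simp
        _ ≤ μ * c * H y * Δ := by
            apply mul_le_mul_of_nonneg_right _ hΔ.le
            exact mul_le_mul_of_nonneg_left hy (by positivity)
        _ = μ * c * Δ * H y := by ring
    have habs : |H (S y) - H y| ≤ H (S y - F y) := by
      have := Hrev (S y) (F y)
      rwa [hF y] at this
    set a := H (S y) with ha
    set b := H y with hb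
    have hanneg : 0 ≤ a := Hnonneg _
    have hδb : H (S y - F y) * b ≤ μ ^ 2 * c := by
      have := mul_le_mul_of_nonneg_right hδ hHy.le
      rwa [div_mul_cancel₀ _ (ne_of_gt hHy)] at this
    have hfac : |a ^ 2 - b ^ 2| = (a + b) * |a - b| := by
      rw [← abs_of_nonneg (by positivity : (0:ℝ) ≤ a + b), ← abs_mul]
      ring_nf
    rw [hfac]
    have hab : a + b ≤ 2 * b + H (S y - F y) := by
      have : a - b ≤ |a - b| := le_abs_self _
      linarith [this.trans habs]
    calc (a + b) * |a - b| ≤ (2 * b + H (S y - F y)) * H (S y - F y) := by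
          apply mul_le_mul hab habs (abs_nonneg _) (by have := Hnonneg (S y - F y); linarith)
      _ = 2 * (H (S y - F y) * b) + H (S y - F y) * H (S y - F y) := by ring
      _ ≤ 2 * (μ ^ 2 * c) + (μ * c * Δ) * (μ * c * Δ) := by
          have h1 : H (S y - F y) * H (S y - F y) ≤ (μ * c * Δ) * (μ * c * Δ) := by
            apply mul_le_mul hδ2 hδ2 (le_trans (abs_nonneg _) habs) (by positivity)
          linarith [hδb, h1]
      _ ≤ 2 * μ ^ 2 * c + 3 * μ ^ 2 * c ^ 2 * Δ ^ 2 := by nlinarith [sq_nonneg (μ * c * Δ)]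
  intro x k _ hj
  have main : ∀ k : ℕ, (∀ j < k, μ / Δ ≤ H (S^[j] x)) →
      |H (S^[k] x) ^ 2 - H x ^ 2| ≤ (2 * μ ^ 2 * c + 3 * μ ^ 2 * c ^ 2 * Δ ^ 2) * k := by
    intro k
    induction k with
    | zero => intro _; simp
    | succ m ih =>
      intro hj
      have h1 : |H (S^[m] x) ^ 2 - H x ^ 2| ≤ (2 * μ ^ 2 * c + 3 * μ ^ 2 * c ^ 2 * Δ ^ 2) * m :=
        ih (fun j hjm => hj j (Nat.lt_succ_of_lt hjm))
      have h2 : |H (S (S^[m] x)) ^ 2 - H (S^[m] x) ^ 2| ≤ 2 * μ ^ 2 * c + 3 * μ ^ 2 * c ^ 2 * Δ ^ 2 :=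
        key _ (hj m (Nat.lt_succ_self m))
      rw [Function.iterate_succ_apply']
      calc |H (S (S^[m] x)) ^ 2 - H x ^ 2|
          ≤ |H (S (S^[m] x)) ^ 2 - H (S^[m] x) ^ 2| + |H (S^[m] x) ^ 2 - H x ^ 2| := by
            exact abs_sub_le _ _ _
        _ ≤ (2 * μ ^ 2 * c + 3 * μ ^ 2 * c ^ 2 * Δ ^ 2) + (2 * μ ^ 2 * c + 3 * μ ^ 2 * c ^ 2 * Δ ^ 2) * m := by linarith
        _ = (2 * μ ^ 2 * c + 3 * μ ^ 2 * c ^ 2 * Δ ^ 2) * (m + 1) := by ring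
        _ = (2 * μ ^ 2 * c + 3 * μ ^ 2 * c ^ 2 * Δ ^ 2) * (m + 1 : ℕ) := by push_cast; ring
  exact main k hj
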